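/- Let c > 0, a > 0, μ > 0 be real numbers. If a natural number N satisfies log(N/(e·μ)) ≥ W((1/(e·μ))·log(c/a)), where W is the Lambert W function on [0,∞) (the inverse of y ↦ y·e^y), and if log(c/a) ≥ 0, then c·μ^N / e^{∫_0^N log s ds} ≤ a, i.e., c·(e·μ/N)^N ≤ a. -/

import Mathlib

open Real intervalIntegral in
lemma log_integrable01 : IntervalIntegrable Real.log MeasureTheory.volume 0 1 := by
  have hg : IntervalIntegrable (fun x : ℝ => 2 * x ^ (-(2⁻¹:ℝ))) MeasureTheory.volume 0 1 :=
    (intervalIntegral.intervalIntegrable_rpow' (by norm_num)).const_mul 2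
  refine hg.mono_fun Real.measurable_log.aestronglyMeasurable ?_
  filter_upwards [MeasureTheory.ae_restrict_mem measurableSet_uIoc] with x hx
  rw [Set.uIoc_of_le (by norm_num : (0:ℝ) ≤ 1)] at hx
  obtain ⟨hx0, hx1⟩ := hx
  have hlogle : Real.log x ≤ 0 := Real.log_nonpos hx0.le hx1
  have hrp : (0:ℝ) < x ^ (-(2⁻¹:ℝ)) := Real.rpow_pos_of_pos hx0 _
  have key : -Real.log x ≤ 2 * x ^ (-(2⁻¹:ℝ)) := by
    have h1 : Real.log (x ^ (-(2⁻¹:ℝ))) = -(2⁻¹:ℝ) * Real.log x := Real.log_rpow hx0 _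
    have h2 : Real.log (x ^ (-(2⁻¹:ℝ))) ≤ x ^ (-(2⁻¹:ℝ)) - 1 :=
      Real.log_le_sub_one_of_pos hrp
    nlinarith
  simp only [Real.norm_eq_abs]
  rw [abs_of_nonpos hlogle, abs_of_nonneg (by positivity)]
  exact key

open Real in
lemma integral_log_zero (N : ℕ) :
    ∫ s in (0:ℝ)..(N:ℝ), Real.log s = N * Real.log N - N := by
  have hInt : IntervalIntegrable Real.log MeasureTheory.volume 0 (N:ℝ) := by
    rcases Nat.eq_zero_or_pos N with h | h
    · simp [h]
    · have h1 : (1:ℝ) ≤ N := by exact_mod_cast h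
      exact log_integrable01.trans
        (intervalIntegral.intervalIntegrable_log (by
          rw [Set.uIcc_of_le h1]; intro hmem; exact absurd hmem.1 (by norm_num)))
  have hF : ContinuousOn (fun x : ℝ => x * Real.log x - x) (Set.Icc 0 (N:ℝ)) :=
    (Real.continuous_mul_log.sub continuous_id).continuousOn
  have hderiv : ∀ x ∈ Set.Ioo (0:ℝ) (N:ℝ),
      HasDerivAt (fun x : ℝ => x * Real.log x - x) (Real.log x) x := by
    intro x hx
    have := (Real.hasDerivAt_mul_log hx.1.ne').sub (hasDerivAt_id x)
    simp at this; exact this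
  have := intervalIntegral.integral_eq_sub_of_hasDerivAt_of_le (by positivity) hF hderiv hInt
  rw [this]
  simp


/-- If `W` is the Lambert W function on `[0,∞)` (inverse of `y ↦ y·e^y`), `c, a, μ > 0`,
`log(c/a) ≥ 0`, and `N` satisfies `log(N/(e·μ)) ≥ W((1/(e·μ))·log(c/a))`, then
`c·μ^N / e^{∫_0^N log s ds} ≤ a`, i.e. `c·(e·μ/N)^N ≤ a`. -/
theorem stmt2 (c a μ : ℝ) (hc : 0 < c) (ha : 0 < a) (hμ : 0 < μ)
    (W : ℝ → ℝ) (hW : ∀ z : ℝ, 0 ≤ z → 0 ≤ W z ∧ W z * Real.exp (W z) = z)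
    (hlog : 0 ≤ Real.log (c / a))
    (N : ℕ)
    (hN : W ((1 / (Real.exp 1 * μ)) * Real.log (c / a)) ≤
      Real.log ((N : ℝ) / (Real.exp 1 * μ))) :
    c * μ ^ N / Real.exp (∫ s in (0:ℝ)..(N : ℝ), Real.log s) ≤ a ∧
    c * (Real.exp 1 * μ / (N : ℝ)) ^ N ≤ a := by
  have he : (0:ℝ) < Real.exp 1 := Real.exp_pos 1
  have heμ : (0:ℝ) < Real.exp 1 * μ := by positivity
  set z : ℝ := (1 / (Real.exp 1 * μ)) * Real.log (c / a) with hzdef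
  have hz0 : 0 ≤ z := by positivity
  obtain ⟨hw0, hwz⟩ := hW z hz0
  set w := W z with hwdef
  have hca : Real.log (c / a) = (Real.exp 1 * μ) * z := by
    rw [hzdef]; field_simp
  rcases Nat.eq_zero_or_pos N with h0 | hNpos
  · subst h0
    -- then log(0/(eμ)) = log 0 = 0, so w ≤ 0, w = 0, z = 0, c = a
    simp only [Nat.cast_zero, zero_div, Real.log_zero] at hN
    have hw0' : w = 0 := le_antisymm hN hw0
    have hz : z = 0 := by rw [← hwz, hw0']; simp
    have : Real.log (c / a) = 0 := by rw [hca, hz, mul_zero]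
    have hle : c ≤ a := by
      have := Real.log_eq_zero.mp this
      rcases this with h | h | h
      · exact absurd h (div_ne_zero hc.ne' ha.ne')
      · rw [div_eq_one_iff_eq ha.ne'] at h; exact h.le
      · nlinarith [div_pos hc ha]
    constructor
    · simpa using hle
    · simpa using hle
  · have hNR : (0:ℝ) < (N:ℝ) := by exact_mod_cast hNpos
    set t : ℝ := Real.log ((N:ℝ) / (Real.exp 1 * μ)) with htdef
    have hexp_t : Real.exp t = (N:ℝ) / (Real.exp 1 * μ) := Real.exp_log (by positivity)
    have hwt : w ≤ t := hN
    have ht0 : 0 ≤ t := le_trans hw0 hwt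
    have hmono : z ≤ t * Real.exp t := by
      calc z = w * Real.exp w := hwz.symm
        _ ≤ t * Real.exp t :=
          mul_le_mul hwt (Real.exp_le_exp.mpr hwt) (Real.exp_pos _).le ht0
    have key : Real.log (c / a) ≤ (N:ℝ) * t := by
      calc Real.log (c / a) = (Real.exp 1 * μ) * z := hca
        _ ≤ (Real.exp 1 * μ) * (t * Real.exp t) := by
            exact mul_le_mul_of_nonneg_left hmono heμ.le
        _ = (N:ℝ) * t := by rw [hexp_t]; field_simp
    -- hence c/a ≤ (N/(eμ))^N
    have hP : (0:ℝ) < ((N:ℝ) / (Real.exp 1 * μ)) ^ N := by positivity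
    have hdiv : c / a ≤ ((N:ℝ) / (Real.exp 1 * μ)) ^ N := by
      have : Real.log (c / a) ≤ Real.log (((N:ℝ) / (Real.exp 1 * μ)) ^ N) := by
        rw [Real.log_pow]; exact key
      exact (Real.log_le_log_iff (div_pos hc ha) hP).mp this
    have hmain : c * (Real.exp 1 * μ / (N : ℝ)) ^ N ≤ a := by
      have hinv : (Real.exp 1 * μ / (N:ℝ)) ^ N = (((N:ℝ) / (Real.exp 1 * μ)) ^ N)⁻¹ := by
        rw [← inv_pow, inv_div]
      rw [hinv]
      rw [div_le_iff₀ ha] at hdiv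
      rw [mul_inv_le_iff₀ hP] -- c * P⁻¹ ≤ a ↔ c ≤ P * a?
      linarith
    refine ⟨?_, hmain⟩
    -- rewrite the integral
    rw [integral_log_zero N]
    have hEN : Real.exp (N:ℝ) = Real.exp 1 ^ N := by
      rw [← Real.exp_nat_mul, mul_one]
    have hlogN : Real.exp ((N:ℝ) * Real.log N - N) = (N:ℝ) ^ N / Real.exp 1 ^ N := by
      rw [Real.exp_sub, Real.exp_nat_mul, Real.exp_log hNR, hEN]
    rw [hlogN]
    have : c * μ ^ N / ((N:ℝ) ^ N / Real.exp 1 ^ N) = c * (Real.exp 1 * μ / (N : ℝ)) ^ N := by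
      field_simp
      rw [div_pow, mul_div_cancel₀ _ (pow_ne_zero N hNR.ne')]
      ring
    rw [this]
    exact hmain
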